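/- Let m ≥ 1, let f : ℝ → ℝ be measurable, nonnegative, and nonincreasing on [0,∞), let R > 0, and let C, C' ∈ EuclideanSpace ℝ m. Then, with respect to the Lebesgue measure, ∫_{x ∈ ball(C',R)} f(‖x − C‖) dx ≤ ∫_{x ∈ ball(C,R)} f(‖x − C‖) dx. -/

import Mathlib

open MeasureTheory Metric Set

/-- **Rearrangement-type inequality for radial nonincreasing integrands.**
If `f` is measurable, nonnegative and nonincreasing on `[0, ∞)`, then among all balls of
radius `R`, the integral of `x ↦ f(‖x − C‖)` is largest over the ball centered at `C`. -/
theorem stmt9 (m : ℕ) (hm : 1 ≤ m) (f : ℝ → ℝ) (hmeas : Measurable f)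
    (hnonneg : ∀ r ∈ Ici (0 : ℝ), 0 ≤ f r) (hanti : AntitoneOn f (Ici (0 : ℝ)))
    (R : ℝ) (hR : 0 < R) (C C' : EuclideanSpace ℝ (Fin m)) :
    (∫ x in ball C' R, f ‖x - C‖) ≤ ∫ x in ball C R, f ‖x - C‖ := by
  set μ : Measure (EuclideanSpace ℝ (Fin m)) := volume with hμ
  set g : EuclideanSpace ℝ (Fin m) → ℝ := fun x => f ‖x - C‖ with hg
  have hgmeas : Measurable g := hmeas.comp ((measurable_id.sub_const C).norm)
  have hgnn : ∀ x, 0 ≤ g x := fun x => hnonneg _ (norm_nonneg _)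
  have hgbd : ∀ x, g x ≤ f 0 :=
    fun x => hanti self_mem_Ici (norm_nonneg _) (norm_nonneg _)
  have hB : MeasurableSet (ball C R) := measurableSet_ball
  have hB' : MeasurableSet (ball C' R) := measurableSet_ball
  have hfin : μ (ball C R) < ⊤ := measure_ball_lt_top
  have hfin' : μ (ball C' R) < ⊤ := measure_ball_lt_top
  have hint : ∀ s : Set (EuclideanSpace ℝ (Fin m)), μ s < ⊤ → IntegrableOn g s μ := by
    intro s hs
    refine Integrable.mono'
      ((integrableOn_const hs.ne) : IntegrableOn (fun _ => f 0) s μ)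
      hgmeas.aestronglyMeasurable ?_
    filter_upwards with x
    rw [Real.norm_of_nonneg (hgnn x)]
    exact hgbd x
  have hfin'' : μ (ball C' R \ ball C R) < ⊤ :=
    lt_of_le_of_lt (measure_mono diff_subset) hfin'
  have hfin''' : μ (ball C R \ ball C' R) < ⊤ :=
    lt_of_le_of_lt (measure_mono diff_subset) hfin
  have hfinI : μ (ball C' R ∩ ball C R) < ⊤ :=
    lt_of_le_of_lt (measure_mono inter_subset_left) hfin'
  -- equal volumes of the two difference sets
  have hvol : μ (ball C' R \ ball C R) = μ (ball C R \ ball C' R) := by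
    have h1 := measure_inter_add_diff (μ := μ) (ball C' R) hB
    have h2 := measure_inter_add_diff (μ := μ) (ball C R) hB'
    have hballs : μ (ball C' R) = μ (ball C R) := by
      rw [Measure.addHaar_ball_center μ C', Measure.addHaar_ball_center μ C]
    rw [inter_comm] at h2
    have : μ (ball C' R ∩ ball C R) + μ (ball C' R \ ball C R)
        = μ (ball C' R ∩ ball C R) + μ (ball C R \ ball C' R) := by
      rw [h1, h2, hballs]
    exact (ENNReal.add_right_inj hfinI.ne).1 this
  -- key comparison on the difference sets
  have hkey : (∫ x in ball C' R \ ball C R, g x ∂μ) ≤ ∫ x in ball C R \ ball C' R, g x ∂μ := by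
    have h1 : (∫ x in ball C' R \ ball C R, g x ∂μ)
        ≤ ∫ _x in ball C' R \ ball C R, f R ∂μ := by
      refine setIntegral_mono_on (hint _ hfin'') (integrableOn_const hfin''.ne)
        (hB'.diff hB) ?_
      intro x hx
      have hxR : R ≤ ‖x - C‖ := by
        have := hx.2
        simp only [mem_ball, dist_eq_norm] at this
        linarith [not_lt.1 this]
      exact hanti hR.le (le_trans hR.le hxR) hxR
    have h2 : (∫ _x in ball C R \ ball C' R, f R ∂μ)
        ≤ ∫ x in ball C R \ ball C' R, g x ∂μ := by
      refine setIntegral_mono_on (integrableOn_const hfin'''.ne) (hint _ hfin''')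
        (hB.diff hB') ?_
      intro x hx
      have hxR : ‖x - C‖ ≤ R := by
        have := hx.1
        simp only [mem_ball, dist_eq_norm] at this
        linarith
      exact hanti (norm_nonneg _) hR.le hxR
    calc (∫ x in ball C' R \ ball C R, g x ∂μ)
        ≤ ∫ _x in ball C' R \ ball C R, f R ∂μ := h1
      _ = ∫ _x in ball C R \ ball C' R, f R ∂μ := by
          rw [setIntegral_const, setIntegral_const, measureReal_def, measureReal_def, hvol]
      _ ≤ ∫ x in ball C R \ ball C' R, g x ∂μ := h2
  have hsplit1 : (∫ x in ball C' R, g x ∂μ)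
      = (∫ x in ball C' R ∩ ball C R, g x ∂μ) + ∫ x in ball C' R \ ball C R, g x ∂μ :=
    (integral_inter_add_diff hB (hint _ hfin')).symm
  have hsplit2 : (∫ x in ball C R, g x ∂μ)
      = (∫ x in ball C R ∩ ball C' R, g x ∂μ) + ∫ x in ball C R \ ball C' R, g x ∂μ :=
    (integral_inter_add_diff hB' (hint _ hfin)).symm
  have hicomm : (∫ x in ball C' R ∩ ball C R, g x ∂μ)
      = ∫ x in ball C R ∩ ball C' R, g x ∂μ := by rw [inter_comm]
  calc (∫ x in ball C' R, g x ∂μ)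
      = (∫ x in ball C' R ∩ ball C R, g x ∂μ) + ∫ x in ball C' R \ ball C R, g x ∂μ := hsplit1
    _ ≤ (∫ x in ball C R ∩ ball C' R, g x ∂μ) + ∫ x in ball C R \ ball C' R, g x ∂μ := by
        rw [hicomm]; exact add_le_add_right hkey _
    _ = ∫ x in ball C R, g x ∂μ := hsplit2.symm
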